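/- For the normalized shallow neural tangent kernel with one hidden layer (L=1), the limit as the bias β tends to infinity of k̈_NTK(x,z; 1, β) = (1/(β²+1))·Θ^{(1)}(x,z) equals 2 − arccos(λ^{(0)}(x,z))/π, where λ^{(0)}(x,z) = ⟨x,z⟩/(‖x‖‖z‖). -/

import Mathlib

/-- Limit of the normalized shallow NTK (one hidden layer) as the bias `β → ∞`:
`k̈_NTK(x,z;1,β) = Θ⁽¹⁾(x,z)/(β²+1)` tends to `2 - arccos(λ⁽⁰⁾)/π`. -/
theorem ntk_shallow_bias_limit {d : ℕ} (x z : EuclideanSpace ℝ (Fin d))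
    (hx : x ≠ 0) (hz : z ≠ 0) :
    let S0 : ℝ := (inner ℝ x z : ℝ)
    let lam : ℝ := S0 / Real.sqrt ((inner ℝ x x : ℝ) * (inner ℝ z z : ℝ))
    let k0 : ℝ := (1 / Real.pi) * (Real.pi - Real.arccos lam)
    let k1 : ℝ := (1 / Real.pi) *
      (lam * (Real.pi - Real.arccos lam) + Real.sqrt (1 - lam ^ 2))
    Filter.Tendsto
      (fun β : ℝ =>
        ((S0 + β ^ 2) * k0 + k1 * Real.sqrt ((inner ℝ x x : ℝ) * (inner ℝ z z : ℝ))
            + β ^ 2) / (β ^ 2 + 1))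
      Filter.atTop
      (nhds (2 - Real.arccos ((inner ℝ x z : ℝ) / (‖x‖ * ‖z‖)) / Real.pi)) := by
  intro S0 lam k0 k1
  have hsq : Real.sqrt ((inner ℝ x x : ℝ) * (inner ℝ z z : ℝ)) = ‖x‖ * ‖z‖ := by
    rw [real_inner_self_eq_norm_sq, real_inner_self_eq_norm_sq]
    rw [show ‖x‖ ^ 2 * ‖z‖ ^ 2 = (‖x‖ * ‖z‖) ^ 2 by ring]
    exact Real.sqrt_sq (by positivity)
  have hlam : lam = (inner ℝ x z : ℝ) / (‖x‖ * ‖z‖) := by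
    simp only [lam, S0, hsq]
  set s := Real.sqrt ((inner ℝ x x : ℝ) * (inner ℝ z z : ℝ))
  set C : ℝ := S0 * k0 + k1 * s - (k0 + 1) with hC
  have hfun : ∀ β : ℝ,
      ((S0 + β ^ 2) * k0 + k1 * s + β ^ 2) / (β ^ 2 + 1)
        = (k0 + 1) + C * (β ^ 2 + 1)⁻¹ := by
    intro β
    have hβ : β ^ 2 + 1 ≠ 0 := by positivity
    field_simp [hC]
    ring
  have hlim : Filter.Tendsto (fun β : ℝ => (k0 + 1) + C * (β ^ 2 + 1)⁻¹)
      Filter.atTop (nhds (k0 + 1 + C * 0)) := by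
    refine Filter.Tendsto.add tendsto_const_nhds (Filter.Tendsto.const_mul _ ?_)
    refine Filter.Tendsto.inv_tendsto_atTop ?_
    exact Filter.tendsto_atTop_add_const_right _ 1
      (Filter.tendsto_pow_atTop (by norm_num))
  have hval : k0 + 1 + C * 0
      = 2 - Real.arccos ((inner ℝ x z : ℝ) / (‖x‖ * ‖z‖)) / Real.pi := by
    rw [mul_zero, add_zero, ← hlam]
    simp only [k0]
    field_simp [Real.pi_ne_zero]
    ring
  rw [← hval]
  exact hlim.congr (fun β => (hfun β).symm)
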